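/- Let G be a finite simple graph with maximum degree Δ. If G is C₅-free (contains no cycle on 5 vertices as a subgraph), then ω₂'(G) ≤ Δ². -/

import Mathlib

open SimpleGraph

/-- `G.ContainsSub H` means `G` contains a copy of `H` as a (not necessarily induced)
subgraph, i.e. there is an injective graph homomorphism from `H` to `G`. -/
def SimpleGraph.ContainsSub {V W : Type*} (G : SimpleGraph V) (H : SimpleGraph W) : Prop :=
  ∃ f : W → V, Function.Injective f ∧ ∀ a b, H.Adj a b → G.Adj (f a) (f b)

/-- A strong clique of `G`: a set of edges of `G` any two distinct members of which
either share an endpoint or have endpoints joined by an edge of `G`. -/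
def SimpleGraph.IsStrongClique {V : Type*} (G : SimpleGraph V) (F : Finset (Sym2 V)) : Prop :=
  (F : Set (Sym2 V)) ⊆ G.edgeSet ∧
    ∀ e ∈ F, ∀ f ∈ F, e ≠ f → ∃ x ∈ e, ∃ y ∈ f, x = y ∨ G.Adj x y

/-- The strong clique number `ω₂'(G)`: the largest cardinality of a strong clique. -/
noncomputable def SimpleGraph.strongCliqueNumber {V : Type*} (G : SimpleGraph V) : ℕ :=
  sSup {n | ∃ F : Finset (Sym2 V), G.IsStrongClique F ∧ F.card = n}

open Finset

/-- From `C₅`-freeness: there is no 5-cycle on five distinct vertices. -/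
lemma noC5aux {V : Type*} {G : SimpleGraph V} (hfree : ¬ G.ContainsSub (cycleGraph 5))
    {v0 v1 v2 v3 v4 : V}
    (h01 : G.Adj v0 v1) (h12 : G.Adj v1 v2) (h23 : G.Adj v2 v3) (h34 : G.Adj v3 v4)
    (h40 : G.Adj v4 v0) (n02 : v0 ≠ v2) (n03 : v0 ≠ v3) (n13 : v1 ≠ v3)
    (n14 : v1 ≠ v4) (n24 : v2 ≠ v4) : False := by
  have n01 := h01.ne
  have n12 := h12.ne
  have n23 := h23.ne
  have n34 := h34.ne
  have n40 := h40.ne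
  apply hfree
  refine ⟨![v0, v1, v2, v3, v4], ?_, ?_⟩
  · intro i j hij
    fin_cases i <;> fin_cases j <;> simp_all
  · intro a b hab
    fin_cases a <;> fin_cases b <;>
      first
        | exact absurd hab (by decide)
        | exact h01 | exact h12 | exact h23 | exact h34 | exact h40
        | exact h01.symm | exact h12.symm | exact h23.symm | exact h34.symm | exact h40.symm

/-- Key bound: a strong clique in a `C₅`-free graph has at most `Δ²` edges. -/
lemma strongClique_card_le {V : Type*} [Fintype V] [DecidableEq V]
    (G : SimpleGraph V) [DecidableRel G.Adj]
    (hfree : ¬ G.ContainsSub (cycleGraph 5))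
    (F : Finset (Sym2 V)) (hF : G.IsStrongClique F) :
    F.card ≤ G.maxDegree ^ 2 := by
  classical
  obtain ⟨hFsub, hFclose⟩ := hF
  rcases F.eq_empty_or_nonempty with rfl | ⟨e₀, he₀⟩
  · simp
  have hV : Nonempty V := ⟨e₀.out.1⟩
  -- the F-degree
  set dF : V → ℕ := fun v => (F.filter (fun e => v ∈ e)).card with hdF
  obtain ⟨x, -, hxmax⟩ :=
    Finset.exists_max_image (Finset.univ : Finset V) dF ⟨Classical.arbitrary V, mem_univ _⟩
  have hxmax' : ∀ v : V, dF v ≤ dF x := fun v => hxmax v (mem_univ v)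
  -- basic edge facts
  have hedge : ∀ e ∈ F, e ∈ G.edgeSet := fun e he => hFsub he
  set Y : Finset V := (G.neighborFinset x).filter (fun y => s(x, y) ∈ F) with hY
  have hYadj : ∀ y ∈ Y, G.Adj x y := by
    intro y hy
    exact (G.mem_neighborFinset x y).1 (mem_filter.1 hy).1
  have hYF : ∀ y ∈ Y, s(x, y) ∈ F := fun y hy => (mem_filter.1 hy).2
  -- dF x ≤ Y.card
  have hdFxY : dF x ≤ Y.card := by
    show (F.filter (fun e => x ∈ e)).card ≤ Y.card
    apply Finset.card_le_card_of_injOn (fun e => if h : x ∈ e then Sym2.Mem.other' h else x)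
    · intro e he
      simp only [mem_coe] at he ⊢
      rw [mem_filter] at he
      obtain ⟨heF, hxe⟩ := he
      rw [dif_pos hxe]
      have hspec : s(x, Sym2.Mem.other' hxe) = e := Sym2.other_spec' hxe
      rw [hY, mem_filter, mem_neighborFinset]
      constructor
      · have : s(x, Sym2.Mem.other' hxe) ∈ G.edgeSet := by rw [hspec]; exact hedge e heF
        exact (SimpleGraph.mem_edgeSet G).1 this
      · rw [hspec]; exact heF
    · intro e he e' he' hee
      rw [mem_coe, mem_filter] at he he'
      simp only [dif_pos he.2, dif_pos he'.2] at hee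
      rw [← Sym2.other_spec' he.2, ← Sym2.other_spec' he'.2, hee]
  -- split F into edges meeting N(x) and edges avoiding it
  set Dx : Finset (Sym2 V) := F.filter (fun e => ∃ v ∈ e, G.Adj x v) with hDx
  set B : Finset (Sym2 V) := F.filter (fun e => ¬ ∃ v ∈ e, G.Adj x v) with hB
  have hsplit : Dx.card + B.card = F.card := Finset.card_filter_add_card_filter_not _
  -- every edge of B has a "hub": an endpoint adjacent to all of Y
  have claimI : ∀ b ∈ B, ∃ β, β ∈ b ∧ (∀ y ∈ Y, G.Adj β y) ∧ ¬ G.Adj x β := by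
    intro b
    induction b using Sym2.inductionOn with
    | hf p q =>
      intro hb
      rw [hB, mem_filter] at hb
      obtain ⟨hbF, hbB⟩ := hb
      push_neg at hbB
      have hpq : G.Adj p q := (SimpleGraph.mem_edgeSet G).1 (hedge _ hbF)
      have hxp : ¬ G.Adj x p := hbB p (Sym2.mem_mk_left p q)
      have hxq : ¬ G.Adj x q := hbB q (Sym2.mem_mk_right p q)
      have hxnotin : x ∉ s(p, q) := by
        intro hx
        rcases Sym2.mem_iff.1 hx with rfl | rfl
        · exact hxq hpq
        · exact hxp hpq.symm
      have contact : ∀ y ∈ Y, G.Adj p y ∨ G.Adj q y := by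
        intro y hy
        have hxy : G.Adj x y := hYadj y hy
        have hyF : s(x, y) ∈ F := hYF y hy
        have hne : s(p, q) ≠ s(x, y) := by
          intro h
          exact hxnotin (h ▸ (Sym2.mem_mk_left x y))
        obtain ⟨u, hu, w, hw, hrel⟩ := hFclose _ hbF _ hyF hne
        rcases Sym2.mem_iff.1 hw with rfl | rfl
        · rcases hrel with rfl | hadj
          · exact absurd hu hxnotin
          · exact absurd hadj.symm (hbB u hu)
        · rcases hrel with rfl | hadj
          · exact absurd hxy (hbB _ hu)
          · rcases Sym2.mem_iff.1 hu with rfl | rfl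
            · exact Or.inl hadj
            · exact Or.inr hadj
      by_cases hp : ∀ y ∈ Y, G.Adj p y
      · exact ⟨p, Sym2.mem_mk_left p q, hp, hxp⟩
      · push_neg at hp
        obtain ⟨y₂, hy₂Y, hpy₂⟩ := hp
        have hxy₂ : G.Adj x y₂ := hYadj y₂ hy₂Y
        have hqy₂ : G.Adj q y₂ := (contact y₂ hy₂Y).resolve_left hpy₂
        refine ⟨q, Sym2.mem_mk_right p q, ?_, hxq⟩
        intro y hyY
        rcases contact y hyY with hpy | hqy
        · -- C₅ : x - y - p - q - y₂ - x
          exfalso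
          have hxy : G.Adj x y := hYadj y hyY
          have nxp : x ≠ p := fun h => hxq (h ▸ hpq)
          have nxq : x ≠ q := fun h => hxp (h ▸ hpq).symm
          have nyq : y ≠ q := fun h => hxq (h ▸ hxy)
          have nyy₂ : y ≠ y₂ := fun h => hpy₂ (h ▸ hpy)
          have npy₂ : p ≠ y₂ := fun h => hxp (h ▸ hxy₂)
          exact noC5aux hfree hxy hpy.symm hpq hqy₂ hxy₂.symm nxp nxq nyq nyy₂ npy₂
        · exact hqy
  -- hub choice function
  set hub : Sym2 V → V := fun b => if h : b ∈ B then (claimI b h).choose else x with hhub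
  have hub_mem : ∀ b ∈ B, hub b ∈ b := by
    intro b h
    simp only [hhub, dif_pos h]
    exact (claimI b h).choose_spec.1
  have hub_adj : ∀ b ∈ B, ∀ y ∈ Y, G.Adj (hub b) y := by
    intro b h
    simp only [hhub, dif_pos h]
    exact (claimI b h).choose_spec.2.1
  have hub_nadj : ∀ b ∈ B, ¬ G.Adj x (hub b) := by
    intro b h
    simp only [hhub, dif_pos h]
    exact (claimI b h).choose_spec.2.2
  set H : Finset V := B.image hub with hH
  have Hadj : ∀ β ∈ H, ∀ y ∈ Y, G.Adj β y := by
    intro β hβ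
    obtain ⟨b₀, hb₀, rfl⟩ := Finset.mem_image.1 hβ
    exact hub_adj b₀ hb₀
  have Hnadj : ∀ β ∈ H, ¬ G.Adj x β := by
    intro β hβ
    obtain ⟨b₀, hb₀, rfl⟩ := Finset.mem_image.1 hβ
    exact hub_nadj b₀ hb₀
  -- per-hub capacity bound
  have capacity : ∀ β ∈ H,
      (B.filter (fun b => hub b = β)).card ≤ (Y.filter (fun y => s(β, y) ∉ F)).card := by
    intro β hβ
    have hβY : ∀ y ∈ Y, G.Adj β y := Hadj β hβ
    have hβx : ¬ G.Adj x β := Hnadj β hβ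
    set Bβ : Finset (Sym2 V) := B.filter (fun b => hub b = β) with hBβ
    set Yocc : Finset V := Y.filter (fun y => s(β, y) ∈ F) with hYocc
    set Fβ : Finset (Sym2 V) := F.filter (fun e => β ∈ e) with hFβ
    have h1 : Bβ ⊆ Fβ := by
      intro b hb
      rw [hBβ, mem_filter] at hb
      rw [hFβ, mem_filter]
      refine ⟨(mem_filter.1 hb.1).1, ?_⟩
      rw [← hb.2]
      exact hub_mem b hb.1
    have h2 : Yocc.image (fun y => s(β, y)) ⊆ Fβ := by
      intro e he
      obtain ⟨y, hy, rfl⟩ := Finset.mem_image.1 he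
      rw [hYocc, mem_filter] at hy
      rw [hFβ, mem_filter]
      exact ⟨hy.2, Sym2.mem_mk_left β y⟩
    have hdisj : Disjoint Bβ (Yocc.image (fun y => s(β, y))) := by
      rw [Finset.disjoint_right]
      intro e he heB
      obtain ⟨y, hy, rfl⟩ := Finset.mem_image.1 he
      have hyY : y ∈ Y := (mem_filter.1 hy).1
      have hxy : G.Adj x y := hYadj y hyY
      have heB' : s(β, y) ∈ B := (mem_filter.1 heB).1
      rw [hB, mem_filter] at heB'
      exact heB'.2 ⟨y, Sym2.mem_mk_right β y, hxy⟩
    have himg : (Yocc.image (fun y => s(β, y))).card = Yocc.card := by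
      apply Finset.card_image_of_injOn
      intro y hy y' hy' hyy
      rcases Sym2.eq_iff.1 hyy with ⟨-, h⟩ | ⟨h1, -⟩
      · exact h
      · exfalso
        apply hβx
        have : G.Adj x y' := hYadj y' (mem_filter.1 hy').1
        rw [← h1] at this
        exact this
    have hcard1 : Bβ.card + Yocc.card ≤ Fβ.card := by
      calc Bβ.card + Yocc.card = (Bβ ∪ Yocc.image (fun y => s(β, y))).card := by
            rw [Finset.card_union_of_disjoint hdisj, himg]
        _ ≤ Fβ.card := Finset.card_le_card (Finset.union_subset h1 h2)
    have hFβ_le : Fβ.card ≤ dF x := hxmax' β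
    have hYsplit : Yocc.card + (Y.filter (fun y => s(β, y) ∉ F)).card = Y.card := by
      rw [hYocc]
      exact Finset.card_filter_add_card_filter_not _
    omega
  -- sum the capacity bounds
  have hBcard : B.card = ∑ β ∈ H, (B.filter (fun b => hub b = β)).card := by
    rw [hH]
    exact Finset.card_eq_sum_card_image hub B
  have hBle : B.card ≤ ∑ β ∈ H, (Y.filter (fun y => s(β, y) ∉ F)).card := by
    rw [hBcard]
    exact Finset.sum_le_sum capacity
  -- swap the double sum
  have hswap : ∑ β ∈ H, (Y.filter (fun y => s(β, y) ∉ F)).card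
      = ∑ y ∈ Y, (H.filter (fun β => s(β, y) ∉ F)).card := by
    simp only [Finset.card_filter]
    exact Finset.sum_comm
  -- per-y bound: free hub edges at y are non-F edges at y
  have hperY : ∀ y ∈ Y, (H.filter (fun β => s(β, y) ∉ F)).card ≤ G.degree y - dF y := by
    intro y hy
    have hxy : G.Adj x y := hYadj y hy
    have hinc : G.incidenceFinset y ∩ F = F.filter (fun e => y ∈ e) := by
      ext e
      simp only [Finset.mem_inter, mem_incidenceFinset, Finset.mem_filter]
      constructor
      · rintro ⟨hi, heF⟩
        exact ⟨heF, hi.2⟩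
      · rintro ⟨heF, hye⟩
        exact ⟨⟨hedge e heF, hye⟩, heF⟩
    have hsd : (G.incidenceFinset y \ F).card = G.degree y - dF y := by
      have := Finset.card_sdiff_add_card_inter (G.incidenceFinset y) F
      rw [hinc] at this
      have hdeg : (G.incidenceFinset y).card = G.degree y :=
        G.card_incidenceFinset_eq_degree y
      have hdF' : (F.filter (fun e => y ∈ e)).card = dF y := rfl
      omega
    rw [← hsd]
    apply Finset.card_le_card_of_injOn (fun β => s(β, y))
    · intro β hβ
      simp only [mem_coe] at hβ ⊢
      rw [mem_filter] at hβ
      rw [Finset.mem_sdiff, mem_incidenceFinset]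
      refine ⟨⟨?_, Sym2.mem_mk_right β y⟩, hβ.2⟩
      exact (SimpleGraph.mem_edgeSet G).2 (Hadj β hβ.1 y hy)
    · intro β hβ β' hβ' hββ
      rcases Sym2.eq_iff.1 hββ with ⟨h, -⟩ | ⟨h1, h2⟩
      · exact h
      · exfalso
        rw [mem_coe, mem_filter] at hβ
        apply Hnadj β hβ.1
        rw [h1]
        exact hxy
  -- Dx is covered by the neighborhood incidences
  have hDxle : Dx.card ≤ ∑ s ∈ G.neighborFinset x, dF s := by
    have hsub : Dx ⊆ (G.neighborFinset x).biUnion (fun s => F.filter (fun e => s ∈ e)) := by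
      intro e he
      rw [hDx, mem_filter] at he
      obtain ⟨v, hv, hadj⟩ := he.2
      rw [Finset.mem_biUnion]
      exact ⟨v, (G.mem_neighborFinset x v).2 hadj, mem_filter.2 ⟨he.1, hv⟩⟩
    calc Dx.card ≤ ((G.neighborFinset x).biUnion (fun s => F.filter (fun e => s ∈ e))).card :=
          Finset.card_le_card hsub
      _ ≤ ∑ s ∈ G.neighborFinset x, (F.filter (fun e => s ∈ e)).card :=
          Finset.card_biUnion_le
  have hdFdeg : ∀ s : V, dF s ≤ G.degree s := by
    intro s
    have : F.filter (fun e => s ∈ e) ⊆ G.incidenceFinset s := by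
      intro e he
      rw [mem_filter] at he
      rw [mem_incidenceFinset]
      exact ⟨hedge e he.1, he.2⟩
    calc dF s ≤ (G.incidenceFinset s).card := Finset.card_le_card this
      _ = G.degree s := G.card_incidenceFinset_eq_degree s
  have hYsum : ∑ y ∈ Y, (G.degree y - dF y) ≤ ∑ s ∈ G.neighborFinset x, (G.degree s - dF s) := by
    apply Finset.sum_le_sum_of_subset_of_nonneg
    · rw [hY]; exact Finset.filter_subset _ _
    · intro _ _ _
      exact Nat.zero_le _
  have hBfinal : B.card ≤ ∑ s ∈ G.neighborFinset x, (G.degree s - dF s) := by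
    calc B.card ≤ ∑ β ∈ H, (Y.filter (fun y => s(β, y) ∉ F)).card := hBle
      _ = ∑ y ∈ Y, (H.filter (fun β => s(β, y) ∉ F)).card := hswap
      _ ≤ ∑ y ∈ Y, (G.degree y - dF y) := Finset.sum_le_sum hperY
      _ ≤ _ := hYsum
  have htotal : F.card ≤ ∑ s ∈ G.neighborFinset x, G.degree s := by
    have hsum : (∑ s ∈ G.neighborFinset x, dF s)
        + (∑ s ∈ G.neighborFinset x, (G.degree s - dF s))
        = ∑ s ∈ G.neighborFinset x, G.degree s := by
      rw [← Finset.sum_add_distrib]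
      apply Finset.sum_congr rfl
      intro s _
      have := hdFdeg s
      omega
    omega
  calc F.card ≤ ∑ s ∈ G.neighborFinset x, G.degree s := htotal
    _ ≤ ∑ _s ∈ G.neighborFinset x, G.maxDegree :=
        Finset.sum_le_sum (fun s _ => G.degree_le_maxDegree s)
    _ = (G.neighborFinset x).card * G.maxDegree := by
        rw [Finset.sum_const, smul_eq_mul]
    _ = G.degree x * G.maxDegree := by rw [G.card_neighborFinset_eq_degree x]
    _ ≤ G.maxDegree * G.maxDegree := Nat.mul_le_mul_right _ (G.degree_le_maxDegree x)
    _ = G.maxDegree ^ 2 := (sq G.maxDegree).symm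

/-- Theorem 1.4(2): if `G` is `C₅`-free with maximum degree `Δ`, then `ω₂'(G) ≤ Δ²`. -/
theorem strongCliqueNumber_le_of_c5Free {V : Type*} [Fintype V] [DecidableEq V]
    (G : SimpleGraph V) [DecidableRel G.Adj] (Δ : ℕ) (hΔ : G.maxDegree = Δ)
    (hfree : ¬ G.ContainsSub (cycleGraph 5)) :
    G.strongCliqueNumber ≤ Δ ^ 2 := by
  subst hΔ
  apply csSup_le'
  rintro n ⟨F, hF, rfl⟩
  exact strongClique_card_le G hfree F hF
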